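/- arXiv:1311.7575 — 3 statements merged into one kernel-verified Lean document; each statement's English description precedes it below -/
import Mathlib

section
/- Let X, Y, Z be pointed metric spaces, let 0 < p ≤ s ≤ ∞ and p ≥ r > 0. If S : X → Y is Lipschitz (m^L(s;p),r)-summing and T : Y → Z is Lipschitz (s,m^L(s;s))-summing, then T ∘ S : X → Z is Lipschitz (p,m^L(r;r))-summing and π^L_{(p,m^L(r;r))}(T ∘ S) ≤ π^L_{(s,m^L(s;s))}(T) · π^L_{(m^L(s;p),r)}(S). -/
open MeasureTheory ENNReal NNReal

noncomputable section

/-- The closed unit ball `B_{X^#}` of the Lipschitz dual of a pointed metric space `(X, x₀)`: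
all Lipschitz functions `f : X → ℝ` with `f x₀ = 0` and Lipschitz constant at most `1`. -/
def dualBall (X : Type*) [MetricSpace X] (x₀ : X) : Set (X → ℝ) :=
  {f | LipschitzWith 1 f ∧ f x₀ = 0}

/-- The strong `ℓ_p` norm `‖(σ,x',x'')|ℓ_p‖ = (Σ_j |σ_j|^p d(x'_j,x''_j)^p)^{1/p}`
(with the sup for `p = ∞`). -/
def strongNorm {X : Type*} [MetricSpace X] (p : ℝ≥0∞) {m : ℕ}
    (σ : Fin m → ℝ) (x' x'' : Fin m → X) : ℝ≥0∞ :=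
  eLpNorm (fun j => σ j * dist (x' j) (x'' j)) p Measure.count

/-- The weak Lipschitz `ℓ_p` norm
`‖(σ,x',x'')|ℓ_p^{L,w}‖ = sup_{f ∈ B_{X^#}} (Σ_j |σ_j|^p |f(x'_j) - f(x''_j)|^p)^{1/p}`. -/
def weakNorm {X : Type*} [MetricSpace X] (x₀ : X) (p : ℝ≥0∞) {m : ℕ}
    (σ : Fin m → ℝ) (x' x'' : Fin m → X) : ℝ≥0∞ :=
  ⨆ f ∈ dualBall X x₀, eLpNorm (fun j => σ j * (f (x' j) - f (x'' j))) p Measure.count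

/-- The `q`-conjugate index `s'(q)`, determined by `1/s'(q) = 1/q - 1/s`. -/
def conjIdx (q s : ℝ≥0∞) : ℝ≥0∞ := (1 / q - 1 / s)⁻¹

/-- The Lipschitz mixed `(s;q)`-norm
`m^L_{(s;q)}(σ,x',x'') = inf ‖τ|ℓ_{s'(q)}‖ ⬝ ‖(σ/τ,x',x'')|ℓ_s^{L,w}‖`,
the infimum over all finite sequences `τ` of nonzero reals. -/
def mixedNorm {X : Type*} [MetricSpace X] (x₀ : X) (s q : ℝ≥0∞) {m : ℕ}
    (σ : Fin m → ℝ) (x' x'' : Fin m → X) : ℝ≥0∞ :=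
  ⨅ (τ : Fin m → ℝ) (_ : ∀ j, τ j ≠ 0),
    eLpNorm τ (conjIdx q s) Measure.count * weakNorm x₀ s (fun j => σ j / τ j) x' x''

/-- `T` is Lipschitz `(m^L(s;q),p)`-summing:
`m^L_{(s;q)}(σ,Tx',Tx'') ≤ C ⬝ ‖(σ,x',x'')|ℓ_p^{L,w}‖` for all finite sequences. -/
def LipMixedP {X Y : Type*} [MetricSpace X] [MetricSpace Y] (x₀ : X) (y₀ : Y)
    (s q p : ℝ≥0∞) (T : X → Y) : Prop :=
  ∃ C : ℝ≥0, ∀ (m : ℕ) (σ : Fin m → ℝ) (x' x'' : Fin m → X),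
    mixedNorm y₀ s q σ (T ∘ x') (T ∘ x'') ≤ C * weakNorm x₀ p σ x' x''

/-- The norm `π^L_{(m^L(s;q),p)}(T)`, the least constant in the defining inequality. -/
def lipMixedPNorm {X Y : Type*} [MetricSpace X] [MetricSpace Y] (x₀ : X) (y₀ : Y)
    (s q p : ℝ≥0∞) (T : X → Y) : ℝ≥0∞ :=
  sInf {C : ℝ≥0∞ | ∀ (m : ℕ) (σ : Fin m → ℝ) (x' x'' : Fin m → X),
    mixedNorm y₀ s q σ (T ∘ x') (T ∘ x'') ≤ C * weakNorm x₀ p σ x' x''}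

/-- `T` is Lipschitz `(p,m^L(s;q))`-summing:
`‖(σ,Tx',Tx'')|ℓ_p‖ ≤ C ⬝ m^L_{(s;q)}(σ,x',x'')` for all finite sequences. -/
def LipPMixed {X Y : Type*} [MetricSpace X] [MetricSpace Y] (x₀ : X)
    (p s q : ℝ≥0∞) (T : X → Y) : Prop :=
  ∃ C : ℝ≥0, ∀ (m : ℕ) (σ : Fin m → ℝ) (x' x'' : Fin m → X),
    strongNorm p σ (T ∘ x') (T ∘ x'') ≤ C * mixedNorm x₀ s q σ x' x''

/-- The norm `π^L_{(p,m^L(s;q))}(T)`, the least constant in the defining inequality. -/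
def lipPMixedNorm {X Y : Type*} [MetricSpace X] [MetricSpace Y] (x₀ : X)
    (p s q : ℝ≥0∞) (T : X → Y) : ℝ≥0∞ :=
  sInf {C : ℝ≥0∞ | ∀ (m : ℕ) (σ : Fin m → ℝ) (x' x'' : Fin m → X),
    strongNorm p σ (T ∘ x') (T ∘ x'') ≤ C * mixedNorm x₀ s q σ x' x''}

/-- The Lipschitz constant of a map, as an element of `ℝ≥0∞` (equal to `∞` if the map is
not Lipschitz). -/
def lipConst {α β : Type*} [PseudoEMetricSpace α] [PseudoEMetricSpace β] (f : α → β) : ℝ≥0∞ :=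
  ⨅ (K : ℝ≥0) (_ : LipschitzWith K f), (K : ℝ≥0∞)



/-! ### Auxiliary lemmas -/

private lemma holder_count {m : ℕ} {p q s : ℝ≥0∞} (hpqs : 1/p = 1/q + 1/s) (τ g : Fin m → ℝ) :
    eLpNorm (fun j => τ j * g j) p Measure.count
      ≤ eLpNorm τ q Measure.count * eLpNorm g s Measure.count := by
  haveI : ENNReal.HolderTriple q s p := ⟨by simpa [one_div] using hpqs.symm⟩
  have := eLpNorm_smul_le_mul_eLpNorm (μ := Measure.count) (f := g) (φ := τ)
    (measurable_of_countable g).aestronglyMeasurable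
    (measurable_of_countable τ).aestronglyMeasurable (p := q) (q := s) (r := p)
  exact this

private lemma conj_rel {p s : ℝ≥0∞} (hps : p ≤ s) : 1/p = 1/(conjIdx p s) + 1/s := by
  have h : s⁻¹ ≤ p⁻¹ := ENNReal.inv_le_inv' hps
  simp only [conjIdx, one_div, inv_inv]
  exact (tsub_add_cancel_of_le h).symm

private lemma conj_self (s : ℝ≥0∞) : conjIdx s s = ∞ := by
  simp [conjIdx]

/-- Hölder-type inequality for weak Lipschitz norms. -/
private lemma weak_holder {X : Type*} [MetricSpace X] (x₀ : X) {m : ℕ} {a b c : ℝ≥0∞}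
    (h : 1/a = 1/b + 1/c) (σ τ : Fin m → ℝ) (x' x'' : Fin m → X) (hτ : ∀ j, τ j ≠ 0) :
    weakNorm x₀ a σ x' x''
      ≤ eLpNorm τ b Measure.count * weakNorm x₀ c (fun j => σ j / τ j) x' x'' := by
  refine iSup₂_le fun f hf => ?_
  have key : (fun j => σ j * (f (x' j) - f (x'' j)))
      = fun j => τ j * ((σ j / τ j) * (f (x' j) - f (x'' j))) := by
    funext j
    rw [← mul_assoc, mul_div_cancel₀ _ (hτ j)]
  rw [key]
  refine (holder_count h τ _).trans (mul_le_mul_right ?_ _)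
  exact le_iSup₂ (f := fun (g : X → ℝ) (_ : g ∈ dualBall X x₀) =>
    eLpNorm (fun j => (σ j / τ j) * (g (x' j) - g (x'' j))) c Measure.count) f hf

private lemma weak_le_mixed {X : Type*} [MetricSpace X] (x₀ : X) {m : ℕ} (r : ℝ≥0∞)
    (σ : Fin m → ℝ) (x' x'' : Fin m → X) :
    weakNorm x₀ r σ x' x'' ≤ mixedNorm x₀ r r σ x' x'' := by
  refine le_iInf₂ fun τ hτ => ?_
  refine weak_holder x₀ ?_ σ τ x' x'' hτ
  rw [conj_self]
  simp

private lemma mixed_le_weak {X : Type*} [MetricSpace X] (x₀ : X) {m : ℕ} (s : ℝ≥0∞)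
    (σ : Fin m → ℝ) (x' x'' : Fin m → X) :
    mixedNorm x₀ s s σ x' x'' ≤ weakNorm x₀ s σ x' x'' := by
  refine (iInf₂_le (fun _ => (1:ℝ)) (fun _ => one_ne_zero)).trans ?_
  rw [conj_self]
  have h1 : eLpNorm (fun _ : Fin m => (1:ℝ)) ∞ Measure.count ≤ 1 := by
    rw [eLpNorm_exponent_top]
    simpa using eLpNormEssSup_le_of_ae_nnnorm_bound (μ := Measure.count)
      (f := fun _ : Fin m => (1:ℝ)) (C := 1) (Filter.Eventually.of_forall fun _ => by simp)
  calc eLpNorm (fun _ : Fin m => (1:ℝ)) ∞ Measure.count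
        * weakNorm x₀ s (fun j => σ j / 1) x' x''
      ≤ 1 * weakNorm x₀ s (fun j => σ j / 1) x' x'' := mul_le_mul_left h1 _
    _ = weakNorm x₀ s σ x' x'' := by simp

private lemma le_mul_iInf₂ {ι : Sort*} {P : ι → Prop} (hne : ∃ i, P i) {x a : ℝ≥0∞}
    (ha : a ≠ ∞) {f : ι → ℝ≥0∞} (h : ∀ i, P i → x ≤ a * f i) :
    x ≤ a * ⨅ (i) (_ : P i), f i := by
  rcases eq_or_ne a 0 with rfl | h0
  · obtain ⟨i, hi⟩ := hne
    simpa using h i hi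
  · rw [ENNReal.mul_iInf_of_ne h0 ha]
    refine le_iInf fun i => ?_
    rw [ENNReal.mul_iInf_of_ne h0 ha]
    exact le_iInf (h i)

/-- Key step: a Lipschitz `(s, m^L(s;s))`-summing map is "Lipschitz `(p, m^L(s;p))`-summing"
with the same constant, for `p ≤ s`. -/
private lemma lemA {Y Z : Type*} [MetricSpace Y] [MetricSpace Z] (y₀ : Y) {p s : ℝ≥0∞}
    (hps : p ≤ s) (T : Y → Z) (a : ℝ≥0∞) (ha : a ≠ ∞)
    (hT : ∀ (m : ℕ) (σ : Fin m → ℝ) (y' y'' : Fin m → Y),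
      strongNorm s σ (T ∘ y') (T ∘ y'') ≤ a * mixedNorm y₀ s s σ y' y'')
    (m : ℕ) (σ : Fin m → ℝ) (y' y'' : Fin m → Y) :
    strongNorm p σ (T ∘ y') (T ∘ y'') ≤ a * mixedNorm y₀ s p σ y' y'' := by
  rw [mixedNorm]
  refine le_mul_iInf₂ ⟨fun _ => (1:ℝ), fun _ => one_ne_zero⟩ ha fun τ hτ => ?_
  calc strongNorm p σ (T ∘ y') (T ∘ y'')
      = eLpNorm (fun j => τ j * ((σ j / τ j) * dist ((T ∘ y') j) ((T ∘ y'') j)))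
          p Measure.count := by
        rw [strongNorm]
        congr 1
        funext j
        rw [← mul_assoc, mul_div_cancel₀ _ (hτ j)]
    _ ≤ eLpNorm τ (conjIdx p s) Measure.count
          * strongNorm s (fun j => σ j / τ j) (T ∘ y') (T ∘ y'') :=
        holder_count (conj_rel hps) τ _
    _ ≤ eLpNorm τ (conjIdx p s) Measure.count
          * (a * mixedNorm y₀ s s (fun j => σ j / τ j) y' y'') :=
        mul_le_mul_right (hT m _ y' y'') _
    _ ≤ eLpNorm τ (conjIdx p s) Measure.count
          * (a * weakNorm y₀ s (fun j => σ j / τ j) y' y'') := by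
        gcongr
        exact mixed_le_weak y₀ s _ y' y''
    _ = a * (eLpNorm τ (conjIdx p s) Measure.count
          * weakNorm y₀ s (fun j => σ j / τ j) y' y'') := by ring

/-- Core composition inequality. -/
private lemma core {X Y Z : Type*} [MetricSpace X] [MetricSpace Y] [MetricSpace Z]
    (x₀ : X) (y₀ : Y) {p s r : ℝ≥0∞} (hps : p ≤ s)
    (S : X → Y) (T : Y → Z) (a b : ℝ≥0∞) (ha : a ≠ ∞)
    (hT : ∀ (m : ℕ) (σ : Fin m → ℝ) (y' y'' : Fin m → Y),
      strongNorm s σ (T ∘ y') (T ∘ y'') ≤ a * mixedNorm y₀ s s σ y' y'')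
    (hS : ∀ (m : ℕ) (σ : Fin m → ℝ) (x' x'' : Fin m → X),
      mixedNorm y₀ s p σ (S ∘ x') (S ∘ x'') ≤ b * weakNorm x₀ r σ x' x'')
    (m : ℕ) (σ : Fin m → ℝ) (x' x'' : Fin m → X) :
    strongNorm p σ ((T ∘ S) ∘ x') ((T ∘ S) ∘ x'') ≤ a * b * mixedNorm x₀ r r σ x' x'' := by
  calc strongNorm p σ ((T ∘ S) ∘ x') ((T ∘ S) ∘ x'')
      = strongNorm p σ (T ∘ (S ∘ x')) (T ∘ (S ∘ x'')) := rfl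
    _ ≤ a * mixedNorm y₀ s p σ (S ∘ x') (S ∘ x'') := lemA y₀ hps T a ha hT m σ _ _
    _ ≤ a * (b * weakNorm x₀ r σ x' x'') := mul_le_mul_right (hS m σ x' x'') _
    _ ≤ a * (b * mixedNorm x₀ r r σ x' x'') := by
        gcongr
        exact weak_le_mixed x₀ r σ x' x''
    _ = a * b * mixedNorm x₀ r r σ x' x'' := (mul_assoc _ _ _).symm

private lemma le_sInf_mul_sInf {A B : Set ℝ≥0∞} {x a0 b0 : ℝ≥0∞}
    (ha0 : a0 ∈ A) (ha0' : a0 ≠ ∞) (hb0 : b0 ∈ B) (hb0' : b0 ≠ ∞)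
    (h : ∀ a ∈ A, a ≠ ∞ → ∀ b ∈ B, x ≤ a * b) : x ≤ sInf A * sInf B := by
  set A' : Set ℝ≥0∞ := A ∩ {a | a ≠ ∞} with hA'
  have hAA : sInf A = sInf A' := by
    refine le_antisymm (sInf_le_sInf Set.inter_subset_left) (le_sInf fun a ha => ?_)
    rcases eq_or_ne a ∞ with rfl | hfin
    · exact le_top.trans_eq rfl
    · exact sInf_le ⟨ha, hfin⟩
  have hBne : sInf B ≠ ∞ := ((sInf_le hb0).trans_lt hb0'.lt_top).ne
  haveI : Nonempty A' := ⟨⟨a0, ha0, ha0'⟩⟩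
  haveI : Nonempty B := ⟨⟨b0, hb0⟩⟩
  rw [hAA, sInf_eq_iInf' A', ENNReal.iInf_mul (fun hc => absurd hc hBne)]
  refine le_iInf fun a => ?_
  rw [sInf_eq_iInf' B, ENNReal.mul_iInf (fun hc => absurd hc a.2.2)]
  exact le_iInf fun bb => h a a.2.1 a.2.2 bb bb.2

/-- if `0 < p ≤ s ≤ ∞`, `0 < r ≤ p`, `S : X → Y` is Lipschitz
`(m^L(s;p),r)`-summing and `T : Y → Z` is Lipschitz `(s,m^L(s;s))`-summing, then
`T ∘ S` is Lipschitz `(p,m^L(r;r))`-summing with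
`π^L_{(p,m^L(r;r))}(T ∘ S) ≤ π^L_{(s,m^L(s;s))}(T) ⬝ π^L_{(m^L(s;p),r)}(S)`. -/
theorem stmt2 {X Y Z : Type*} [MetricSpace X] [MetricSpace Y] [MetricSpace Z]
    (x₀ : X) (y₀ : Y) (z₀ : Z) (p s r : ℝ≥0∞)
    (hp : 0 < p) (hps : p ≤ s) (hr : 0 < r) (hrp : r ≤ p)
    (S : X → Y) (T : Y → Z) (KS KT : ℝ≥0)
    (hS : LipschitzWith KS S) (hT : LipschitzWith KT T)
    (hSsum : LipMixedP x₀ y₀ s p r S) (hTsum : LipPMixed y₀ s s s T) :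
    LipPMixed x₀ p r r (T ∘ S) ∧
    lipPMixedNorm x₀ p r r (T ∘ S) ≤
      lipPMixedNorm y₀ s s s T * lipMixedPNorm x₀ y₀ s p r S := by
  obtain ⟨CT, hCT⟩ := hTsum
  obtain ⟨CS, hCS⟩ := hSsum
  constructor
  · refine ⟨CT * CS, fun m σ x' x'' => ?_⟩
    rw [ENNReal.coe_mul]
    exact core x₀ y₀ hps S T _ _ ENNReal.coe_ne_top hCT hCS m σ x' x''
  · rw [lipPMixedNorm, lipPMixedNorm, lipMixedPNorm]
    exact le_sInf_mul_sInf (a0 := (CT : ℝ≥0∞)) (b0 := (CS : ℝ≥0∞)) hCT ENNReal.coe_ne_top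
      hCS ENNReal.coe_ne_top fun a hA ha b hB =>
        sInf_le fun m σ x' x'' => core x₀ y₀ hps S T a b ha hA hB m σ x' x''
end
end

section
/- Let X, Y, Z be pointed metric spaces and 0 < p ≤ s ≤ t ≤ ∞. If S : Y → Z is a Lipschitz (m^L(t;s),s)-summing map and T : X → Y is a Lipschitz (m^L(s;p),p)-summing map, then S ∘ T : X → Z is a Lipschitz (m^L(t;p),p)-summing map and π^L_{(m^L(t;p),p)}(S ∘ T) ≤ π^L_{(m^L(t;s),s)}(S) · π^L_{(m^L(s;p),p)}(T). -/
open MeasureTheory ENNReal NNReal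

noncomputable section

-- auxiliary

lemma mixedNorm_eq_subtype {X : Type*} [MetricSpace X] (x₀ : X) (s q : ℝ≥0∞) {m : ℕ}
    (σ : Fin m → ℝ) (x' x'' : Fin m → X) :
    mixedNorm x₀ s q σ x' x'' = ⨅ τ : {τ : Fin m → ℝ // ∀ j, τ j ≠ 0},
      eLpNorm τ.1 (conjIdx q s) Measure.count * weakNorm x₀ s (fun j => σ j / τ.1 j) x' x'' := by
  rw [mixedNorm, iInf_subtype']

instance nonempty_nzseq (m : ℕ) : Nonempty {τ : Fin m → ℝ // ∀ j, τ j ≠ 0} :=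
  ⟨⟨fun _ => 1, fun _ => one_ne_zero⟩⟩

/-- Splitting off one factor from the mixed norm. -/
lemma mixedNorm_le_split {Z : Type*} [MetricSpace Z] (z₀ : Z) {p s t : ℝ≥0∞}
    (hps : p ≤ s) (hst : s ≤ t) {m : ℕ} (σ τ₁ : Fin m → ℝ) (hτ₁ : ∀ j, τ₁ j ≠ 0)
    (z' z'' : Fin m → Z) :
    mixedNorm z₀ t p σ z' z'' ≤
      eLpNorm τ₁ (conjIdx p s) Measure.count *
        mixedNorm z₀ t s (fun j => σ j / τ₁ j) z' z'' := by
  set a := eLpNorm τ₁ (conjIdx p s) Measure.count with ha_def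
  have ha : a ≠ ∞ := eLpNorm_lt_top_of_finite.ne
  rw [mixedNorm_eq_subtype z₀ t s (fun j => σ j / τ₁ j) z' z'',
    ENNReal.mul_iInf (fun h => absurd h ha)]
  refine le_iInf fun τ₂ => ?_
  have hnz : ∀ j, τ₁ j * τ₂.1 j ≠ 0 := fun j => mul_ne_zero (hτ₁ j) (τ₂.2 j)
  have step := iInf₂_le (f := fun (τ : Fin m → ℝ) (_ : ∀ j, τ j ≠ 0) =>
      eLpNorm τ (conjIdx p t) Measure.count * weakNorm z₀ t (fun j => σ j / τ j) z' z'')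
    (fun j => τ₁ j * τ₂.1 j) hnz
  rw [mixedNorm]
  refine step.trans ?_
  have hdiv : (fun j => σ j / (τ₁ j * τ₂.1 j)) = fun j => σ j / τ₁ j / τ₂.1 j := by
    funext j; rw [div_div]
  rw [hdiv]
  have holder : eLpNorm (fun j => τ₁ j * τ₂.1 j) (conjIdx p t) Measure.count ≤
      a * eLpNorm τ₂.1 (conjIdx s t) Measure.count := by
    refine eLpNorm_smul_le_mul_eLpNorm (μ := (Measure.count : Measure (Fin m)))
      (f := τ₂.1) (φ := τ₁)
      ((measurable_of_countable _).aestronglyMeasurable)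
      ((measurable_of_countable _).aestronglyMeasurable) (hpqr := ⟨?_⟩)
    simp only [conjIdx, one_div, inv_inv]
    exact (tsub_add_tsub_cancel (ENNReal.inv_le_inv.2 hps) (ENNReal.inv_le_inv.2 hst))
  calc eLpNorm (fun j => τ₁ j * τ₂.1 j) (conjIdx p t) Measure.count *
        weakNorm z₀ t (fun j => σ j / τ₁ j / τ₂.1 j) z' z''
      ≤ a * eLpNorm τ₂.1 (conjIdx s t) Measure.count *
        weakNorm z₀ t (fun j => σ j / τ₁ j / τ₂.1 j) z' z'' :=
        _root_.mul_le_mul_left holder _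
    _ = a * (eLpNorm τ₂.1 (conjIdx s t) Measure.count *
        weakNorm z₀ t (fun j => σ j / τ₁ j / τ₂.1 j) z' z'') := mul_assoc _ _ _

/-- The key composition inequality. -/
lemma key_comp {X Y Z : Type*} [MetricSpace X] [MetricSpace Y] [MetricSpace Z]
    (x₀ : X) (y₀ : Y) (z₀ : Z) {p s t : ℝ≥0∞} (hps : p ≤ s) (hst : s ≤ t)
    (S : Y → Z) (T : X → Y) (C₁ C₂ : ℝ≥0∞) (hC₁ : C₁ ≠ ∞)
    (h₁ : ∀ (m : ℕ) (σ : Fin m → ℝ) (y' y'' : Fin m → Y),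
      mixedNorm z₀ t s σ (S ∘ y') (S ∘ y'') ≤ C₁ * weakNorm y₀ s σ y' y'')
    (h₂ : ∀ (m : ℕ) (σ : Fin m → ℝ) (x' x'' : Fin m → X),
      mixedNorm y₀ s p σ (T ∘ x') (T ∘ x'') ≤ C₂ * weakNorm x₀ p σ x' x'')
    (m : ℕ) (σ : Fin m → ℝ) (x' x'' : Fin m → X) :
    mixedNorm z₀ t p σ ((S ∘ T) ∘ x') ((S ∘ T) ∘ x'') ≤
      C₁ * C₂ * weakNorm x₀ p σ x' x'' := by
  have step2 : mixedNorm z₀ t p σ ((S ∘ T) ∘ x') ((S ∘ T) ∘ x'') ≤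
      C₁ * mixedNorm y₀ s p σ (T ∘ x') (T ∘ x'') := by
    rw [mixedNorm_eq_subtype y₀, ENNReal.mul_iInf (fun h => absurd h hC₁)]
    refine le_iInf fun τ₁ => ?_
    calc mixedNorm z₀ t p σ ((S ∘ T) ∘ x') ((S ∘ T) ∘ x'')
        ≤ eLpNorm τ₁.1 (conjIdx p s) Measure.count *
          mixedNorm z₀ t s (fun j => σ j / τ₁.1 j) ((S ∘ T) ∘ x') ((S ∘ T) ∘ x'') :=
          mixedNorm_le_split z₀ hps hst σ τ₁.1 τ₁.2 _ _
      _ ≤ eLpNorm τ₁.1 (conjIdx p s) Measure.count *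
          (C₁ * weakNorm y₀ s (fun j => σ j / τ₁.1 j) (T ∘ x') (T ∘ x'')) :=
          _root_.mul_le_mul_right (h₁ m _ (T ∘ x') (T ∘ x'')) _
      _ = C₁ * (eLpNorm τ₁.1 (conjIdx p s) Measure.count *
          weakNorm y₀ s (fun j => σ j / τ₁.1 j) (T ∘ x') (T ∘ x'')) := by ring
  calc mixedNorm z₀ t p σ ((S ∘ T) ∘ x') ((S ∘ T) ∘ x'')
      ≤ C₁ * mixedNorm y₀ s p σ (T ∘ x') (T ∘ x'') := step2
    _ ≤ C₁ * (C₂ * weakNorm x₀ p σ x' x'') := _root_.mul_le_mul_right (h₂ m σ x' x'') _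
    _ = C₁ * C₂ * weakNorm x₀ p σ x' x'' := (mul_assoc _ _ _).symm


/-- if `0 < p ≤ s ≤ t ≤ ∞`, `S : Y → Z` is Lipschitz `(m^L(t;s),s)`-summing
and `T : X → Y` is Lipschitz `(m^L(s;p),p)`-summing, then `S ∘ T` is Lipschitz
`(m^L(t;p),p)`-summing with
`π^L_{(m^L(t;p),p)}(S ∘ T) ≤ π^L_{(m^L(t;s),s)}(S) ⬝ π^L_{(m^L(s;p),p)}(T)`. -/
theorem stmt4 {X Y Z : Type*} [MetricSpace X] [MetricSpace Y] [MetricSpace Z]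
    (x₀ : X) (y₀ : Y) (z₀ : Z) (p s t : ℝ≥0∞)
    (hp : 0 < p) (hps : p ≤ s) (hst : s ≤ t)
    (S : Y → Z) (T : X → Y) (KS KT : ℝ≥0)
    (hS : LipschitzWith KS S) (hT : LipschitzWith KT T)
    (hSsum : LipMixedP y₀ z₀ t s s S) (hTsum : LipMixedP x₀ y₀ s p p T) :
    LipMixedP x₀ z₀ t p p (S ∘ T) ∧
    lipMixedPNorm x₀ z₀ t p p (S ∘ T) ≤
      lipMixedPNorm y₀ z₀ t s s S * lipMixedPNorm x₀ y₀ s p p T := by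
  obtain ⟨CS, hCS⟩ := hSsum
  obtain ⟨CT, hCT⟩ := hTsum
  constructor
  · refine ⟨CS * CT, fun m σ x' x'' => ?_⟩
    have := key_comp x₀ y₀ z₀ hps hst S T CS CT coe_ne_top hCS hCT m σ x' x''
    rwa [ENNReal.coe_mul]
  · set A : Set ℝ≥0∞ := {C : ℝ≥0∞ | ∀ (m : ℕ) (σ : Fin m → ℝ) (y' y'' : Fin m → Y),
      mixedNorm z₀ t s σ (S ∘ y') (S ∘ y'') ≤ C * weakNorm y₀ s σ y' y''} with hA
    set B : Set ℝ≥0∞ := {C : ℝ≥0∞ | ∀ (m : ℕ) (σ : Fin m → ℝ) (x' x'' : Fin m → X),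
      mixedNorm y₀ s p σ (T ∘ x') (T ∘ x'') ≤ C * weakNorm x₀ p σ x' x''} with hB
    have hCSA : (CS : ℝ≥0∞) ∈ A := hCS
    have hCTB : (CT : ℝ≥0∞) ∈ B := hCT
    have hmain : lipMixedPNorm x₀ z₀ t p p (S ∘ T) ≤
        (⨅ C : {C : ℝ≥0∞ // C ∈ A ∧ C ≠ ∞}, C.1) * ⨅ C : B, C.1 := by
      have hle : ∀ (C₁ : {C : ℝ≥0∞ // C ∈ A ∧ C ≠ ∞}) (C₂ : B),
          lipMixedPNorm x₀ z₀ t p p (S ∘ T) ≤ C₁.1 * C₂.1 := fun C₁ C₂ =>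
        sInf_le (key_comp x₀ y₀ z₀ hps hst S T C₁.1 C₂.1 C₁.2.2 C₁.2.1 C₂.2)
      have hf : ∃ C : {C : ℝ≥0∞ // C ∈ A ∧ C ≠ ∞}, C.1 ≠ ∞ :=
        ⟨⟨CS, hCSA, coe_ne_top⟩, coe_ne_top⟩
      have hg : ∃ C : B, C.1 ≠ ∞ := ⟨⟨CT, hCTB⟩, coe_ne_top⟩
      exact ENNReal.le_iInf_mul_iInf hf hg hle
    refine hmain.trans (le_of_eq ?_)
    congr 1
    · refine le_antisymm ?_ (le_iInf fun C => sInf_le C.2.1)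
      refine le_sInf fun C hC => ?_
      rcases eq_or_ne C ∞ with rfl | hC'
      · exact le_top
      · exact iInf_le (fun C : {C : ℝ≥0∞ // C ∈ A ∧ C ≠ ∞} => C.1) ⟨C, hC, hC'⟩
    · exact (sInf_eq_iInf' B).symm
end
end

section
/- Let X and Y be pointed metric spaces and 0 < p ≤ s ≤ ∞. Every Lipschitz (p,m^L(s;p))-summing map T : X → Y is Lipschitz (s,m^L(s;s))-summing, and π^L_{(s,m^L(s;s))}(T) ≤ π^L_{(p,m^L(s;p))}(T). -/
open MeasureTheory ENNReal NNReal

noncomputable section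

section Aux

open Finset in
lemma eLpNorm_count_fin {m : ℕ} (f : Fin m → ℝ) {q : ℝ≥0∞} (hq0 : q ≠ 0) (hq : q ≠ ∞) :
    eLpNorm f q MeasureTheory.Measure.count
      = (∑ j, (‖f j‖₊ : ℝ≥0∞) ^ q.toReal) ^ (1 / q.toReal) := by
  rw [MeasureTheory.eLpNorm_eq_lintegral_rpow_enorm_toReal hq0 hq,
    MeasureTheory.lintegral_count, tsum_fintype]
  rfl

lemma eLpNorm_top_count_fin {m : ℕ} (f : Fin m → ℝ) :
    eLpNorm f ∞ MeasureTheory.Measure.count = ⨆ j, (‖f j‖₊ : ℝ≥0∞) := by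
  rw [MeasureTheory.eLpNorm_exponent_top]
  exact MeasureTheory.eLpNormEssSup_count f

lemma eLpNorm_comp_le {m m' : ℕ} (e : Fin m' → Fin m) (he : Function.Injective e)
    (g : Fin m → ℝ) (q : ℝ≥0∞) :
    eLpNorm (g ∘ e) q MeasureTheory.Measure.count
      ≤ eLpNorm g q MeasureTheory.Measure.count := by
  rcases eq_or_ne q 0 with rfl | hq0
  · simp [MeasureTheory.eLpNorm_exponent_zero]
  rcases eq_or_ne q ∞ with rfl | hqt
  · rw [eLpNorm_top_count_fin, eLpNorm_top_count_fin]
    exact iSup_le fun i => le_iSup (fun j => (‖g j‖₊ : ℝ≥0∞)) (e i)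
  · rw [eLpNorm_count_fin _ hq0 hqt, eLpNorm_count_fin _ hq0 hqt]
    refine ENNReal.rpow_le_rpow ?_ (by positivity)
    have himg : ∑ j ∈ Finset.univ.image e, (‖g j‖₊ : ℝ≥0∞) ^ q.toReal
        = ∑ i, (‖(g ∘ e) i‖₊ : ℝ≥0∞) ^ q.toReal := by
      rw [Finset.sum_image (fun a _ b _ hab => he hab)]; rfl
    rw [← himg]
    exact Finset.sum_le_sum_of_subset (Finset.subset_univ _)

lemma weakNorm_comp_le {X : Type*} [MetricSpace X] (x₀ : X) (q : ℝ≥0∞) {m m' : ℕ}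
    (e : Fin m' → Fin m) (he : Function.Injective e)
    (σ : Fin m → ℝ) (x' x'' : Fin m → X) :
    weakNorm x₀ q (σ ∘ e) (x' ∘ e) (x'' ∘ e) ≤ weakNorm x₀ q σ x' x'' := by
  refine iSup₂_le fun f hf => ?_
  refine le_trans ?_ (le_iSup₂ (f := fun f (_ : f ∈ dualBall X x₀) =>
    eLpNorm (fun j => σ j * (f (x' j) - f (x'' j))) q MeasureTheory.Measure.count) f hf)
  exact eLpNorm_comp_le e he (fun j => σ j * (f (x' j) - f (x'' j))) q

lemma eLpNorm_le_mul_of_le {m : ℕ} (g h : Fin m → ℝ) (M : ℝ≥0) (q : ℝ≥0∞)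
    (hle : ∀ j, ‖g j‖₊ ≤ M * ‖h j‖₊) :
    eLpNorm g q MeasureTheory.Measure.count
      ≤ (M : ℝ≥0∞) * eLpNorm h q MeasureTheory.Measure.count := by
  have h1 : eLpNorm g q MeasureTheory.Measure.count
      ≤ eLpNorm ((M : ℝ) • h) q MeasureTheory.Measure.count := by
    refine MeasureTheory.eLpNorm_mono fun j => ?_
    have h2 : ‖g j‖ ≤ (M : ℝ) * ‖h j‖ := by
      have := hle j
      rw [← NNReal.coe_le_coe] at this
      push_cast at this
      simpa using this
    simpa [Pi.smul_apply, norm_smul, Real.norm_eq_abs, NNReal.abs_eq] using h2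
  refine h1.trans ?_
  rw [MeasureTheory.eLpNorm_const_smul]
  simp

lemma weakNorm_le_mixedNorm {X : Type*} [MetricSpace X] (x₀ : X) (s : ℝ≥0∞) {m : ℕ}
    (σ : Fin m → ℝ) (x' x'' : Fin m → X) :
    weakNorm x₀ s σ x' x'' ≤ mixedNorm x₀ s s σ x' x'' := by
  have hconj : conjIdx s s = ∞ := by simp [conjIdx]
  refine le_iInf₂ fun τ hτ => ?_
  rw [hconj]
  set M : ℝ≥0 := Finset.univ.sup fun j => ‖τ j‖₊ with hM
  have hMle : (M : ℝ≥0∞) ≤ eLpNorm τ ∞ MeasureTheory.Measure.count := by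
    rw [eLpNorm_top_count_fin]
    rw [ENNReal.coe_finset_sup]
    exact Finset.sup_le fun j _ => le_iSup (fun j => (‖τ j‖₊ : ℝ≥0∞)) j
  have step : weakNorm x₀ s σ x' x''
      ≤ (M : ℝ≥0∞) * weakNorm x₀ s (fun j => σ j / τ j) x' x'' := by
    refine iSup₂_le fun f hf => ?_
    have hpt : ∀ j, ‖σ j * (f (x' j) - f (x'' j))‖₊
        ≤ M * ‖(σ j / τ j) * (f (x' j) - f (x'' j))‖₊ := by
      intro j
      have hrw : τ j * ((σ j / τ j) * (f (x' j) - f (x'' j)))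
          = σ j * (f (x' j) - f (x'' j)) := by
        rw [← mul_assoc, mul_comm (τ j), div_mul_cancel₀ _ (hτ j)]
      rw [← hrw, nnnorm_mul]
      exact mul_le_mul_left (Finset.le_sup (f := fun j => ‖τ j‖₊) (Finset.mem_univ j)) _
    refine le_trans (eLpNorm_le_mul_of_le _ _ M s hpt) ?_
    refine mul_le_mul_right ?_ _
    exact le_iSup₂ (f := fun f (_ : f ∈ dualBall X x₀) =>
      eLpNorm (fun j => (σ j / τ j) * (f (x' j) - f (x'' j))) s
        MeasureTheory.Measure.count) f hf
  exact step.trans (mul_le_mul_left hMle _)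

end Aux

open MeasureTheory in
lemma core_step {X Y : Type*} [MetricSpace X] [MetricSpace Y] (x₀ : X)
    (p s : ℝ≥0∞) (hp : 0 < p) (hps : p ≤ s) (T : X → Y) (C : ℝ≥0∞)
    (h : ∀ (m : ℕ) (σ : Fin m → ℝ) (x' x'' : Fin m → X),
      strongNorm p σ (T ∘ x') (T ∘ x'') ≤ C * mixedNorm x₀ s p σ x' x'') :
    ∀ (m : ℕ) (σ : Fin m → ℝ) (x' x'' : Fin m → X),
      strongNorm s σ (T ∘ x') (T ∘ x'') ≤ C * mixedNorm x₀ s s σ x' x'' := by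
  classical
  intro m σ x' x''
  rcases eq_or_lt_of_le hps with rfl | hlt
  · exact h m σ x' x''
  have hpt : p ≠ ∞ := (hlt.trans_le le_top).ne
  have hpr : 0 < p.toReal := ENNReal.toReal_pos hp.ne' hpt
  -- reduce to weak norm
  refine le_trans ?_ (mul_le_mul_right (weakNorm_le_mixedNorm x₀ s σ x' x'') C)
  rcases eq_or_ne s ∞ with rfl | hst
  · -- s = ∞ case
    rw [strongNorm, eLpNorm_top_count_fin]
    simp only [Function.comp_apply]
    refine iSup_le fun j => ?_
    have hinj : Function.Injective (fun _ : Fin 1 => j) := fun a b _ => Subsingleton.elim a b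
    have h1 := h 1 (σ ∘ fun _ => j) (x' ∘ fun _ => j) (x'' ∘ fun _ => j)
    have hL : strongNorm p (σ ∘ fun _ : Fin 1 => j) (T ∘ (x' ∘ fun _ => j))
        (T ∘ (x'' ∘ fun _ => j)) = (‖σ j * dist (T (x' j)) (T (x'' j))‖₊ : ℝ≥0∞) := by
      rw [strongNorm, eLpNorm_count_fin _ hp.ne' hpt, Fin.sum_univ_one]
      simp only [Function.comp_apply]
      rw [← ENNReal.rpow_mul, mul_one_div_cancel hpr.ne', ENNReal.rpow_one]
    have hMix : mixedNorm x₀ ∞ p (σ ∘ fun _ : Fin 1 => j) (x' ∘ fun _ => j)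
        (x'' ∘ fun _ => j) ≤ weakNorm x₀ ∞ σ x' x'' := by
      refine le_trans (iInf₂_le (fun _ => (1 : ℝ)) (fun _ => one_ne_zero)) ?_
      have hc : conjIdx p ∞ = p := by
        simp [conjIdx, one_div]
      rw [hc]
      have h1' : eLpNorm (fun _ : Fin 1 => (1 : ℝ)) p Measure.count = 1 := by
        rw [eLpNorm_count_fin _ hp.ne' hpt, Fin.sum_univ_one]
        simp
      rw [h1', one_mul]
      have hdiv : (fun i : Fin 1 => (σ ∘ fun _ : Fin 1 => j) i / (fun _ : Fin 1 => (1:ℝ)) i)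
          = σ ∘ fun _ : Fin 1 => j := by funext i; simp
      rw [hdiv]
      exact weakNorm_comp_le x₀ ∞ (fun _ => j) hinj σ x' x''
    rw [hL] at h1
    exact h1.trans (mul_le_mul_right hMix C)
  · -- p < s < ∞ case
    have hs0 : s ≠ 0 := (hp.trans_le hps).ne'
    have hsr : 0 < s.toReal := ENNReal.toReal_pos hs0 hst
    have hprsr : p.toReal < s.toReal := (ENNReal.toReal_lt_toReal hpt hst).2 hlt
    have hinvlt : 1 / s < 1 / p := by
      rw [one_div, one_div]; exact ENNReal.inv_lt_inv.2 hlt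
    have h1pt : 1 / p ≠ ∞ := by
      rw [one_div]; exact ENNReal.inv_ne_top.2 hp.ne'
    have hD0 : 1 / p - 1 / s ≠ 0 := by
      rw [ne_eq, tsub_eq_zero_iff_le]; exact not_le.2 hinvlt
    have hDt : 1 / p - 1 / s ≠ ∞ := ne_top_of_le_ne_top h1pt tsub_le_self
    have hr0 : conjIdx p s ≠ 0 := by
      rw [conjIdx]; exact ENNReal.inv_ne_zero.2 hDt
    have hrt : conjIdx p s ≠ ∞ := by
      rw [conjIdx]; exact ENNReal.inv_ne_top.2 hD0
    have hrr : 0 < (conjIdx p s).toReal := ENNReal.toReal_pos hr0 hrt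
    set pr := p.toReal
    set sr := s.toReal
    set rr := (conjIdx p s).toReal with hrrdef
    have hrrval : rr⁻¹ = pr⁻¹ - sr⁻¹ := by
      rw [hrrdef, conjIdx, ENNReal.toReal_inv, inv_inv,
        ENNReal.toReal_sub_of_le hinvlt.le h1pt]
      simp [one_div, ENNReal.toReal_inv]
      rfl
    have hE1 : sr / rr + 1 = sr / pr := by
      rw [div_eq_mul_inv, hrrval, div_eq_mul_inv, mul_sub,
        mul_inv_cancel₀ hsr.ne', sub_add_cancel]
    have hE2 : sr / pr * pr = sr := div_mul_cancel₀ _ hpr.ne'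
    have hE3 : sr / rr * rr = sr := div_mul_cancel₀ _ hrr.ne'
    have hE4 : 1 / pr = 1 / sr + 1 / rr := by
      rw [one_div, one_div, one_div, hrrval]; ring
    -- abbreviation for the terms
    set a : Fin m → ℝ≥0∞ := fun j => (‖σ j * dist (T (x' j)) (T (x'' j))‖₊ : ℝ≥0∞) with hadef
    have hat : ∀ j, a j ≠ ∞ := fun j => ENNReal.coe_ne_top
    have haj : ∀ j, (‖σ j * dist (T (x' j)) (T (x'' j))‖₊ : ℝ≥0∞) = a j := fun j => rfl
    set A : ℝ≥0∞ := ∑ j, a j ^ sr with hAdef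
    have hgoal : strongNorm s σ (T ∘ x') (T ∘ x'') = A ^ (1 / sr) := by
      rw [strongNorm, eLpNorm_count_fin _ hs0 hst]
      rfl
    rw [hgoal]
    rcases eq_or_ne A 0 with hA0 | hA0
    · rw [hA0, ENNReal.zero_rpow_of_pos (by positivity)]; exact bot_le
    have hAt : A ≠ ∞ := by
      rw [hAdef]
      exact (ENNReal.sum_lt_top.2 fun j _ =>
        (ENNReal.rpow_ne_top_of_nonneg hsr.le (hat j)).lt_top).ne
    -- index set of nonzero terms
    set J : Finset (Fin m) := Finset.univ.filter (fun j => a j ≠ 0) with hJdef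
    set e : Fin J.card → Fin m := fun i => (J.equivFin.symm i : Fin m) with hedef
    have hemem : ∀ i, e i ∈ J := fun i => (J.equivFin.symm i).2
    have hane : ∀ i, a (e i) ≠ 0 := by
      intro i
      have := hemem i
      rw [hJdef, Finset.mem_filter] at this
      exact this.2
    have hinj : Function.Injective e := fun i₁ i₂ hh =>
      J.equivFin.symm.injective (Subtype.ext hh)
    have hsumJ : ∀ g : Fin m → ℝ≥0∞, ∑ i, g (e i) = ∑ j ∈ J, g j := by
      intro g
      rw [← Finset.sum_coe_sort J g]
      exact Equiv.sum_comp J.equivFin.symm (fun x : J => g (x : Fin m))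
    have hJA : ∀ g : Fin m → ℝ≥0∞, (∀ j, a j = 0 → g j = 0) →
        ∑ j ∈ J, g j = ∑ j, g j := by
      intro g hg
      rw [hJdef]
      exact Finset.sum_filter_of_ne fun j _ hne hc0 => hne (hg j hc0)
    -- the weight sequence
    set τ : Fin m → ℝ := fun j => (a j ^ (sr / rr)).toReal with hτdef
    have hτnorm : ∀ j, (‖τ j‖₊ : ℝ≥0∞) = a j ^ (sr / rr) := by
      intro j
      rw [hτdef]
      rw [show (‖τ j‖₊ : ℝ≥0∞) = ‖τ j‖ₑ from rfl, Real.enorm_eq_ofReal ENNReal.toReal_nonneg, ENNReal.ofReal_toReal]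
      exact ENNReal.rpow_ne_top_of_nonneg (by positivity) (hat j)
    have hτne : ∀ i, τ (e i) ≠ 0 := by
      intro i hzero
      have h0 : a (e i) ^ (sr / rr) = 0 := by
        rw [← hτnorm (e i), hzero]; simp
      rcases ENNReal.rpow_eq_zero_iff.1 h0 with ⟨h1, _⟩ | ⟨h1, _⟩
      · exact hane i h1
      · exact hat (e i) h1
    -- apply hypothesis
    have happ := h J.card (fun i => σ (e i) * τ (e i)) (x' ∘ e) (x'' ∘ e)
    -- compute strong norm
    have hL : strongNorm p (fun i => σ (e i) * τ (e i)) (T ∘ (x' ∘ e)) (T ∘ (x'' ∘ e))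
        = A ^ (1 / pr) := by
      rw [strongNorm, eLpNorm_count_fin _ hp.ne' hpt]
      congr 1
      have hterm : ∀ i, (‖(σ (e i) * τ (e i)) *
          dist (T ((x' ∘ e) i)) (T ((x'' ∘ e) i))‖₊ : ℝ≥0∞) ^ pr = a (e i) ^ sr := by
        intro i
        have hb1 : (σ (e i) * τ (e i)) * dist (T ((x' ∘ e) i)) (T ((x'' ∘ e) i))
            = τ (e i) * (σ (e i) * dist (T (x' (e i))) (T (x'' (e i)))) := by
          simp only [Function.comp_apply]; ring
        rw [hb1, nnnorm_mul, ENNReal.coe_mul, hτnorm, haj]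
        have hmul : a (e i) ^ (sr / rr) * a (e i) = a (e i) ^ (sr / pr) := by
          nth_rewrite 2 [← ENNReal.rpow_one (a (e i))]
          rw [← ENNReal.rpow_add _ _ (hane i) (hat (e i)), hE1]
        rw [hmul, ← ENNReal.rpow_mul, hE2]
      calc ∑ i, (‖(fun i => σ (e i) * τ (e i)) i *
            dist ((T ∘ (x' ∘ e)) i) ((T ∘ (x'' ∘ e)) i)‖₊ : ℝ≥0∞) ^ pr
          = ∑ i, (fun j => a j ^ sr) (e i) := Finset.sum_congr rfl fun i _ => hterm i
        _ = ∑ j ∈ J, a j ^ sr := hsumJ (fun j => a j ^ sr)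
        _ = A := by
            rw [hJA (fun j => a j ^ sr) fun j hj => by
              simp only [hj]; exact ENNReal.zero_rpow_of_pos (by positivity)]
    rw [hL] at happ
    -- bound the mixed norm
    have hTau : eLpNorm (τ ∘ e) (conjIdx p s) Measure.count = A ^ (1 / rr) := by
      rw [eLpNorm_count_fin _ hr0 hrt, ← hrrdef]
      congr 1
      calc ∑ i, (‖(τ ∘ e) i‖₊ : ℝ≥0∞) ^ rr
          = ∑ i, (fun j => a j ^ sr) (e i) := by
            refine Finset.sum_congr rfl fun i _ => ?_
            rw [Function.comp_apply, hτnorm, ← ENNReal.rpow_mul, hE3]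
        _ = ∑ j ∈ J, a j ^ sr := hsumJ (fun j => a j ^ sr)
        _ = A := by
            rw [hJA (fun j => a j ^ sr) fun j hj => by
              simp only [hj]; exact ENNReal.zero_rpow_of_pos (by positivity)]
    have hMix : mixedNorm x₀ s p (fun i => σ (e i) * τ (e i)) (x' ∘ e) (x'' ∘ e)
        ≤ A ^ (1 / rr) * weakNorm x₀ s σ x' x'' := by
      refine le_trans (iInf₂_le (τ ∘ e) hτne) ?_
      rw [hTau]
      refine mul_le_mul_right ?_ _
      have hdiv : (fun i => (fun i => σ (e i) * τ (e i)) i / (τ ∘ e) i) = σ ∘ e := by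
        funext i
        simp only [Function.comp_apply]
        exact mul_div_cancel_right₀ _ (hτne i)
      rw [hdiv]
      exact weakNorm_comp_le x₀ s e hinj σ x' x''
    have hfinal : A ^ (1 / pr) ≤ C * weakNorm x₀ s σ x' x'' * A ^ (1 / rr) := by
      refine (happ.trans (mul_le_mul_right hMix C)).trans (le_of_eq ?_)
      ring
    have hsplit : A ^ (1 / pr) = A ^ (1 / sr) * A ^ (1 / rr) := by
      rw [← ENNReal.rpow_add _ _ hA0 hAt, ← hE4]
    rw [hsplit] at hfinal
    exact (ENNReal.mul_le_mul_iff_left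
      (ENNReal.rpow_pos (pos_iff_ne_zero.2 hA0) hAt).ne'
      (ENNReal.rpow_ne_top_of_nonneg (by positivity) hAt)).1 hfinal

/-- for `0 < p ≤ s ≤ ∞`, every Lipschitz `(p,m^L(s;p))`-summing map is
Lipschitz `(s,m^L(s;s))`-summing, with
`π^L_{(s,m^L(s;s))}(T) ≤ π^L_{(p,m^L(s;p))}(T)`. -/
theorem stmt5 {X Y : Type*} [MetricSpace X] [MetricSpace Y] (x₀ : X)
    (p s : ℝ≥0∞) (hp : 0 < p) (hps : p ≤ s)
    (T : X → Y) (K : ℝ≥0) (hT : LipschitzWith K T)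
    (hsum : LipPMixed x₀ p s p T) :
    LipPMixed x₀ s s s T ∧ lipPMixedNorm x₀ s s s T ≤ lipPMixedNorm x₀ p s p T := by
  constructor
  · obtain ⟨C, hC⟩ := hsum
    exact ⟨C, core_step x₀ p s hp hps T (C : ℝ≥0∞) hC⟩
  · rw [lipPMixedNorm, lipPMixedNorm]
    exact sInf_le_sInf fun D hD => core_step x₀ p s hp hps T D hD
end
end
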